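/- arXiv:1208.5088 — 5 statements merged into one kernel-verified Lean document; each statement's English description precedes it below -/
import Mathlib

section
/- If h: ℝ → ℝ is C² with h(0) = h'(0) = 0, h'' nonnegative and concave on [0,∞), then for all 0 ≤ c ≤ 1 and x ≥ 0, h(cx) ≥ c³ h(x). -/
/-- Auxiliary: if `f` is differentiable with nonnegative derivative on `[0,∞)`,
then `f 0 ≤ f x` for `x ≥ 0`. -/
lemma stmt_3_aux (f : ℝ → ℝ) (hf : Differentiable ℝ f)
    (hf' : ∀ t ≥ (0:ℝ), 0 ≤ deriv f t) {x : ℝ} (hx : 0 ≤ x) : f 0 ≤ f x := by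
  have hmono : MonotoneOn f (Set.Ici (0:ℝ)) := by
    apply monotoneOn_of_deriv_nonneg (convex_Ici 0) hf.continuous.continuousOn
      (hf.differentiableOn.mono interior_subset)
    intro t ht
    rw [interior_Ici] at ht
    exact hf' t (le_of_lt ht)
  exact hmono (Set.mem_Ici.mpr le_rfl) hx hx

theorem stmt_3 (h : ℝ → ℝ) (hC2 : ContDiff ℝ 2 h)
    (h0 : h 0 = 0) (h1 : deriv h 0 = 0)
    (hnonneg : ∀ x ≥ (0:ℝ), 0 ≤ deriv (deriv h) x)
    (hconc : ConcaveOn ℝ (Set.Ici (0:ℝ)) (deriv (deriv h))) :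
    ∀ c x : ℝ, 0 ≤ c → c ≤ 1 → 0 ≤ x → c ^ 3 * h x ≤ h (c * x) := by
  intro c x hc0 hc1 hx0
  have hd : Differentiable ℝ h := hC2.differentiable (by norm_num)
  have hC1 : ContDiff ℝ 1 (deriv h) := by
    have h2 : ContDiff ℝ ((1 + 1 : ℕ) : ℕ∞) h := by exact_mod_cast hC2
    have := h2.iterate_deriv' 1 1
    simpa using this
  have hd1 : Differentiable ℝ (deriv h) := hC1.differentiable (by norm_num)
  -- Step A: concavity gives c * h''(t) ≤ h''(c*t) for t ≥ 0
  have stepA : ∀ t ≥ (0:ℝ), c * deriv (deriv h) t ≤ deriv (deriv h) (c * t) := by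
    intro t ht
    have hct : c * t ∈ Set.Ici (0:ℝ) := mul_nonneg hc0 ht
    have := hconc.2 (Set.mem_Ici.mpr ht) (Set.mem_Ici.mpr (le_refl (0:ℝ)))
      hc0 (by linarith : (0:ℝ) ≤ 1 - c) (by ring)
    simp only [smul_eq_mul] at this
    have h0nn : 0 ≤ deriv (deriv h) 0 := hnonneg 0 le_rfl
    have heq : c * t + (1 - c) * 0 = c * t := by ring
    rw [heq] at this
    nlinarith [this]
  -- Step B: c^2 * h'(t) ≤ h'(c*t) for t ≥ 0
  have stepB : ∀ t ≥ (0:ℝ), c ^ 2 * deriv h t ≤ deriv h (c * t) := by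
    intro t ht
    set F : ℝ → ℝ := fun s => deriv h (c * s) - c ^ 2 * deriv h s with hF
    have hFd : ∀ s : ℝ, HasDerivAt F
        (deriv (deriv h) (c * s) * c - c ^ 2 * deriv (deriv h) s) s := by
      intro s
      have hinner : HasDerivAt (fun u : ℝ => c * u) c s := by
        simpa using (hasDerivAt_id s).const_mul c
      have hcomp : HasDerivAt (fun u => deriv h (c * u)) (deriv (deriv h) (c * s) * c) s :=
        (hd1 (c * s)).hasDerivAt.comp s hinner
      exact hcomp.sub (((hd1 s).hasDerivAt).const_mul (c ^ 2))
    have hFdiff : Differentiable ℝ F := fun s => (hFd s).differentiableAt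
    have hFderiv : ∀ s ≥ (0:ℝ), 0 ≤ deriv F s := by
      intro s hs
      rw [(hFd s).deriv]
      have := stepA s hs
      nlinarith [this, hnonneg s hs]
    have := stmt_3_aux F hFdiff hFderiv ht
    simp only [hF, mul_zero, h1] at this
    linarith
  -- Step C: c^3 * h(t) ≤ h(c*t) for t ≥ 0
  set G : ℝ → ℝ := fun s => h (c * s) - c ^ 3 * h s with hG
  have hGd : ∀ s : ℝ, HasDerivAt G (deriv h (c * s) * c - c ^ 3 * deriv h s) s := by
    intro s
    have hinner : HasDerivAt (fun u : ℝ => c * u) c s := by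
      simpa using (hasDerivAt_id s).const_mul c
    have hcomp : HasDerivAt (fun u => h (c * u)) (deriv h (c * s) * c) s :=
      (hd (c * s)).hasDerivAt.comp s hinner
    exact hcomp.sub (((hd s).hasDerivAt).const_mul (c ^ 3))
  have hGdiff : Differentiable ℝ G := fun s => (hGd s).differentiableAt
  have hGderiv : ∀ s ≥ (0:ℝ), 0 ≤ deriv G s := by
    intro s hs
    rw [(hGd s).deriv]
    have := stepB s hs
    nlinarith [this]
  have := stmt_3_aux G hGdiff hGderiv hx0
  simp only [hG, mul_zero, h0] at this
  linarith
end

section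
/- If h: ℝ → ℝ is C² with h(0) = h'(0) = 0, h'' nonnegative and concave on [0,∞), then h(x) ≤ h(1)·x³ for all x ≥ 1; in particular h(x) = O(x³) as x → ∞. -/
theorem stmt_6 (h : ℝ → ℝ) (hC2 : ContDiff ℝ 2 h)
    (h0 : h 0 = 0) (h1 : deriv h 0 = 0)
    (hnonneg : ∀ x ≥ (0:ℝ), 0 ≤ deriv (deriv h) x)
    (hconc : ConcaveOn ℝ (Set.Ici (0:ℝ)) (deriv (deriv h))) :
    (∀ x ≥ (1:ℝ), h x ≤ h 1 * x ^ 3) ∧ h =O[Filter.atTop] (fun x : ℝ => x ^ 3) := by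
  set g := deriv (deriv h) with hgdef
  have h2 : ContDiff ℝ ((1:ℕ∞)+1) h := by exact_mod_cast hC2
  have hd1 : Differentiable ℝ h := h2.differentiable (by norm_num)
  have hC1d : ContDiff ℝ 1 (deriv h) := (contDiff_succ_iff_deriv.mp h2).2.2
  have hd2 : Differentiable ℝ (deriv h) := hC1d.differentiable (by norm_num)
  -- Step 1: chord inequality from concavity
  have chord : ∀ x > (0:ℝ), ∀ s ∈ Set.Icc (0:ℝ) x, s * g x ≤ x * g s := by
    intro x hx s hs
    have hb : 0 ≤ s / x := div_nonneg hs.1 hx.le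
    have ha : 0 ≤ 1 - s / x := by
      have : s / x ≤ 1 := (div_le_one hx).mpr hs.2
      linarith
    have hsum : (1 - s/x) + s/x = 1 := by ring
    have hcc := hconc.2 (Set.mem_Ici.mpr le_rfl) (Set.mem_Ici.mpr hx.le) ha hb hsum
    rw [smul_eq_mul, smul_eq_mul, smul_eq_mul, smul_eq_mul] at hcc
    have hx0 : (1 - s/x) * 0 + (s/x) * x = s := by field_simp; ring
    rw [hx0] at hcc
    have hg0 : 0 ≤ g 0 := hnonneg 0 le_rfl
    have hkey : s / x * g x ≤ g s := by nlinarith [mul_nonneg ha hg0]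
    have : x * (s / x * g x) ≤ x * g s := by nlinarith
    calc s * g x = x * (s / x * g x) := by field_simp
      _ ≤ x * g s := this
  -- Step 2: x * g x ≤ 2 * h'(x) for x ≥ 0
  have step2 : ∀ x ≥ (0:ℝ), x * g x ≤ 2 * deriv h x := by
    intro x hx
    rcases hx.eq_or_lt with heq | hx
    · rw [← heq]; simp [h1]
    · set c := g x / (2 * x) with hc
      have hmono : MonotoneOn (fun s => deriv h s - s^2 * c) (Set.Icc 0 x) := by
        apply monotoneOn_of_deriv_nonneg (convex_Icc 0 x)
        · exact (hd2.sub (by fun_prop)).continuous.continuousOn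
        · exact (hd2.sub (by fun_prop)).differentiableOn
        · intro s hs
          rw [interior_Icc] at hs
          have hds : HasDerivAt (fun s => deriv h s - s^2*c) (g s - 2*s*c) s := by
            have hp : HasDerivAt (fun s : ℝ => s^2*c) (2*s*c) s := by
              simpa using (hasDerivAt_pow 2 s).mul_const c
            exact ((hd2 s).hasDerivAt.sub hp)
          rw [hds.deriv]
          have hch := chord x hx s ⟨hs.1.le, hs.2.le⟩
          have hrw : 2*s*c = s * g x / x := by rw [hc]; field_simp
          rw [hrw, sub_nonneg, div_le_iff₀ hx]
          linarith
      have := hmono (Set.left_mem_Icc.mpr hx.le) (Set.right_mem_Icc.mpr hx.le) hx.le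
      simp only [h1] at this
      have hxc : x^2 * c = x * g x / 2 := by rw [hc]; field_simp
      rw [hxc] at this
      linarith
  -- deriv h nonneg on [0,∞)
  have hd'nonneg : ∀ x ≥ (0:ℝ), 0 ≤ deriv h x := by
    intro x hx
    have hmono : MonotoneOn (deriv h) (Set.Ici 0) := by
      apply monotoneOn_of_deriv_nonneg (convex_Ici 0) hd2.continuous.continuousOn
        hd2.differentiableOn
      intro s hs
      rw [interior_Ici] at hs
      exact hnonneg s hs.le
    have := hmono (Set.self_mem_Ici) (Set.mem_Ici.mpr hx) hx
    rwa [h1] at this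
  -- h nonneg on [0,∞)
  have hnn : ∀ x ≥ (0:ℝ), 0 ≤ h x := by
    intro x hx
    have hmono : MonotoneOn h (Set.Ici 0) := by
      apply monotoneOn_of_deriv_nonneg (convex_Ici 0) hd1.continuous.continuousOn
        hd1.differentiableOn
      intro s hs
      rw [interior_Ici] at hs
      exact hd'nonneg s hs.le
    have := hmono (Set.self_mem_Ici) (Set.mem_Ici.mpr hx) hx
    rwa [h0] at this
  -- Step 4: x * h'(x) ≤ 3 * h(x) for x ≥ 0
  have key : ∀ x ≥ (0:ℝ), x * deriv h x ≤ 3 * h x := by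
    intro x hx
    have hmono : MonotoneOn (fun x => 3 * h x - x * deriv h x) (Set.Ici 0) := by
      apply monotoneOn_of_deriv_nonneg (convex_Ici 0)
      · exact ((hd1.const_mul 3).sub (differentiable_id.mul hd2)).continuous.continuousOn
      · exact ((hd1.const_mul 3).sub (differentiable_id.mul hd2)).differentiableOn
      · intro s hs
        rw [interior_Ici] at hs
        have hds : HasDerivAt (fun x => 3 * h x - x * deriv h x)
            (3 * deriv h s - (1 * deriv h s + s * g s)) s := by
          exact (((hd1 s).hasDerivAt.const_mul 3).sub
            ((hasDerivAt_id s).mul (hd2 s).hasDerivAt))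
        rw [hds.deriv]
        have := step2 s hs.le
        linarith
    have := hmono (Set.self_mem_Ici) (Set.mem_Ici.mpr hx) hx
    simp only [h0, h1] at this
    linarith
  -- Step 5: h x / x^3 antitone on [1,∞)
  have main : ∀ x ≥ (1:ℝ), h x ≤ h 1 * x ^ 3 := by
    have hanti : AntitoneOn (fun x => h x / x^3) (Set.Ici 1) := by
      apply antitoneOn_of_deriv_nonpos (convex_Ici 1)
      · apply ContinuousOn.div hd1.continuous.continuousOn (by fun_prop)
        intro x hx
        have : (1:ℝ) ≤ x := hx
        positivity
      · intro x hx
        rw [interior_Ici] at hx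
        have hx0 : x ≠ 0 := by intro hh; rw [hh] at hx; norm_num at hx
        exact (((hd1 x).div (differentiable_pow 3 x) (pow_ne_zero 3 hx0))).differentiableWithinAt
      · intro x hx
        rw [interior_Ici] at hx
        have hx0 : (0:ℝ) < x := lt_trans one_pos hx
        have hds : HasDerivAt (fun x => h x / x^3)
            ((deriv h x * x^3 - h x * ((3:ℕ) * x^2)) / (x^3)^2) x := by
          exact (hd1 x).hasDerivAt.div (by simpa using hasDerivAt_pow 3 x)
            (pow_ne_zero 3 hx0.ne')
        rw [hds.deriv]
        apply div_nonpos_of_nonpos_of_nonneg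
        · have hk := key x hx0.le
          have hm := mul_le_mul_of_nonneg_left hk (sq_nonneg x)
          push_cast
          nlinarith
        · positivity
    intro x hx
    have := hanti (Set.self_mem_Ici) (Set.mem_Ici.mpr hx) hx
    simp only [one_pow, div_one] at this
    have hx3 : (0:ℝ) < x^3 := by positivity
    calc h x = (h x / x^3) * x^3 := by field_simp
      _ ≤ h 1 * x^3 := by nlinarith
  refine ⟨main, ?_⟩
  rw [Asymptotics.isBigO_iff]
  refine ⟨|h 1|, ?_⟩
  filter_upwards [Filter.eventually_ge_atTop (1:ℝ)] with x hx
  have h1x : 0 ≤ h x := hnn x (by linarith)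
  have hb := main x hx
  have hx3 : (0:ℝ) < x^3 := by positivity
  rw [Real.norm_eq_abs, Real.norm_eq_abs, abs_of_nonneg h1x, abs_of_nonneg hx3.le]
  calc h x ≤ h 1 * x^3 := hb
    _ ≤ |h 1| * x^3 := by nlinarith [le_abs_self (h 1)]
end

section
/- Suppose h: ℝ → ℝ is even, C², h(0) = h'(0) = h''(0) = 0, and h'' is strictly increasing, unbounded, and concave on [0,∞). Then for every b > 0 and every y ≥ 0, 1 + y + y²/2 − h(by)/h(b) < 2. -/
private lemma aux_nonneg (F F' F'' : ℝ → ℝ) (hF : ∀ x, HasDerivAt F (F' x) x)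
    (hF' : ∀ x, HasDerivAt F' (F'' x) x) (F0 : F 0 = 0) (F'0 : F' 0 = 0)
    (b : ℝ) (hb : 0 ≤ b) (hpos : ∀ x ∈ Set.Icc (0:ℝ) b, 0 ≤ F'' x) : 0 ≤ F b := by
  have hFd : Differentiable ℝ F := fun x => (hF x).differentiableAt
  have hF'd : Differentiable ℝ F' := fun x => (hF' x).differentiableAt
  have hmono' : MonotoneOn F' (Set.Icc 0 b) := by
    apply monotoneOn_of_deriv_nonneg (convex_Icc 0 b) hF'd.continuous.continuousOn
      (hF'd.differentiableOn)
    intro x hx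
    rw [interior_Icc] at hx
    rw [(hF' x).deriv]
    exact hpos x ⟨le_of_lt hx.1, le_of_lt hx.2⟩
  have hF'nonneg : ∀ x ∈ Set.Icc (0:ℝ) b, 0 ≤ F' x := by
    intro x hx
    have := hmono' ⟨le_refl 0, hb⟩ hx hx.1
    rwa [F'0] at this
  have hmono : MonotoneOn F (Set.Icc 0 b) := by
    apply monotoneOn_of_deriv_nonneg (convex_Icc 0 b) hFd.continuous.continuousOn
      (hFd.differentiableOn)
    intro x hx
    rw [interior_Icc] at hx
    rw [(hF x).deriv]
    exact hF'nonneg x ⟨le_of_lt hx.1, le_of_lt hx.2⟩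
  have := hmono ⟨le_refl 0, hb⟩ ⟨hb, le_refl b⟩ hb
  rwa [F0] at this

private lemma key_lemma (h : ℝ → ℝ) (hC2 : ContDiff ℝ 2 h) (h0 : h 0 = 0)
    (h1 : deriv h 0 = 0) (y c b : ℝ) (hb : 0 ≤ b)
    (hcc : ∀ x ∈ Set.Icc (0:ℝ) b, c * deriv (deriv h) x ≤ y ^ 2 * deriv (deriv h) (y * x)) :
    c * h b ≤ h (y * b) := by
  obtain ⟨hdiff, -, hC1⟩ := contDiff_succ_iff_deriv.mp
    (by exact_mod_cast hC2 : ContDiff ℝ ((1 : WithTop ℕ∞) + 1) h)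
  have hd'd : Differentiable ℝ (deriv h) := hC1.differentiable one_ne_zero
  set F : ℝ → ℝ := fun x => h (y * x) - c * h x with hFdef
  set F' : ℝ → ℝ := fun x => deriv h (y * x) * y - c * deriv h x with hF'def
  set F'' : ℝ → ℝ := fun x => deriv (deriv h) (y * x) * y * y - c * deriv (deriv h) x
  have hF : ∀ x, HasDerivAt F (F' x) x := by
    intro x
    have hi : HasDerivAt (fun x : ℝ => y * x) y x := by
      simpa using (hasDerivAt_id x).const_mul y
    exact ((hdiff (y * x)).hasDerivAt.comp x hi).sub ((hdiff x).hasDerivAt.const_mul c)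
  have hF' : ∀ x, HasDerivAt F' (F'' x) x := by
    intro x
    have hi : HasDerivAt (fun x : ℝ => y * x) y x := by
      simpa using (hasDerivAt_id x).const_mul y
    exact (((hd'd (y * x)).hasDerivAt.comp x hi).mul_const y).sub
      ((hd'd x).hasDerivAt.const_mul c)
  have h0' : F 0 = 0 := by simp [hFdef, h0]
  have h1' : F' 0 = 0 := by simp [hF'def, h1]
  have hnn : ∀ x ∈ Set.Icc (0:ℝ) b, 0 ≤ F'' x := by
    intro x hx
    have := hcc x hx
    simp only [F'']
    nlinarith [this]
  have := aux_nonneg F F' F'' hF hF' h0' h1' b hb hnn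
  simp only [hFdef] at this
  linarith

theorem stmt_8 (h : ℝ → ℝ) (heven : ∀ x, h (-x) = h x) (hC2 : ContDiff ℝ 2 h)
    (h0 : h 0 = 0) (h1 : deriv h 0 = 0) (h2 : deriv (deriv h) 0 = 0)
    (hmono : StrictMonoOn (deriv (deriv h)) (Set.Ici (0:ℝ)))
    (hunb : ∀ C : ℝ, ∃ x ≥ (0:ℝ), deriv (deriv h) x > C)
    (hconc : ConcaveOn ℝ (Set.Ici (0:ℝ)) (deriv (deriv h))) :
    ∀ b > (0:ℝ), ∀ y ≥ (0:ℝ), 1 + y + y ^ 2 / 2 - h (b * y) / h b < 2 := by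
  intro b hb y hy
  obtain ⟨hdiff, -, hC1⟩ := contDiff_succ_iff_deriv.mp
    (by exact_mod_cast hC2 : ContDiff ℝ ((1 : WithTop ℕ∞) + 1) h)
  have hd'd : Differentiable ℝ (deriv h) := hC1.differentiable one_ne_zero
  -- h'' nonneg on [0,∞)
  have h''nn : ∀ x : ℝ, 0 ≤ x → 0 ≤ deriv (deriv h) x := by
    intro x hx
    rcases eq_or_lt_of_le hx with rfl | hx'
    · exact le_of_eq h2.symm
    · have := hmono (Set.mem_Ici.2 le_rfl) (Set.mem_Ici.2 hx) hx'
      rw [h2] at this; exact le_of_lt this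
  -- h b > 0
  have hbpos : 0 < h b := by
    have h'pos : ∀ x : ℝ, 0 < x → 0 < deriv h x := by
      intro x hx
      have hsm : StrictMonoOn (deriv h) (Set.Icc 0 x) := by
        apply strictMonoOn_of_deriv_pos (convex_Icc 0 x) hd'd.continuous.continuousOn
        intro t ht
        rw [interior_Icc] at ht
        have := hmono (Set.mem_Ici.2 le_rfl) (Set.mem_Ici.2 ht.1.le) ht.1
        rw [h2] at this; exact this
      have := hsm ⟨le_refl 0, hx.le⟩ ⟨hx.le, le_refl x⟩ hx
      rwa [h1] at this
    have hsm : StrictMonoOn h (Set.Icc 0 b) := by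
      apply strictMonoOn_of_deriv_pos (convex_Icc 0 b) hdiff.continuous.continuousOn
      intro t ht
      rw [interior_Icc] at ht
      exact h'pos t ht.1
    have := hsm ⟨le_refl 0, hb.le⟩ ⟨hb.le, le_refl b⟩ hb
    rwa [h0] at this
  rcases le_or_gt y 1 with hy1 | hy1
  · -- case 0 ≤ y ≤ 1 : h(by) ≥ y³ h(b)
    have hcc : ∀ x ∈ Set.Icc (0:ℝ) b, y ^ 3 * deriv (deriv h) x ≤ y ^ 2 * deriv (deriv h) (y * x) := by
      intro x hx
      have hconc' := hconc.2 (Set.mem_Ici.2 hx.1) (Set.mem_Ici.2 (le_refl (0:ℝ)))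
        hy (by linarith : (0:ℝ) ≤ 1 - y) (by ring)
      simp only [smul_eq_mul, mul_zero, add_zero, h2] at hconc'
      have : y * deriv (deriv h) x ≤ deriv (deriv h) (y * x) := by linarith
      nlinarith [sq_nonneg y]
    have hkey := key_lemma h hC2 h0 h1 y (y ^ 3) b hb.le hcc
    rw [mul_comm y b] at hkey
    have hdiv : y ^ 3 ≤ h (b * y) / h b := (le_div_iff₀ hbpos).2 hkey
    nlinarith [hdiv, sq_nonneg (y - 1), sq_nonneg y, sq_nonneg (y - 1/2)]
  · -- case y > 1 : h(by) ≥ y² h(b)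
    have hcc : ∀ x ∈ Set.Icc (0:ℝ) b, y ^ 2 * deriv (deriv h) x ≤ y ^ 2 * deriv (deriv h) (y * x) := by
      intro x hx
      have hxy : x ≤ y * x := by nlinarith [hx.1]
      have := (hmono.monotoneOn) (Set.mem_Ici.2 hx.1)
        (Set.mem_Ici.2 (by nlinarith [hx.1] : (0:ℝ) ≤ y * x)) hxy
      nlinarith [sq_nonneg y]
    have hkey := key_lemma h hC2 h0 h1 y (y ^ 2) b hb.le hcc
    rw [mul_comm y b] at hkey
    have hdiv : y ^ 2 ≤ h (b * y) / h b := (le_div_iff₀ hbpos).2 hkey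
    nlinarith [hdiv, sq_nonneg (y - 1)]
end

section
/- For h(x) = (1+x)² ln²(1+x) − x² (x ≥ 0), the series ∑_{n≥16} 1/h(√(n/ln ln n)) converges. -/
private lemma log_le_two_sqrt {t : ℝ} (ht : 0 < t) : Real.log t ≤ 2 * Real.sqrt t := by
  have hs : 0 < Real.sqrt t := Real.sqrt_pos.mpr ht
  have h1 : Real.log (Real.sqrt t) ≤ Real.sqrt t - 1 := Real.log_le_sub_one_of_pos hs
  have h2 : Real.log (Real.sqrt t) = Real.log t / 2 := Real.log_sqrt ht.le
  linarith

private lemma key (N : ℝ) (hN : 65536 ≤ N) :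
    N * Real.log N * Real.sqrt (Real.log N) / 64 ≤
      (1 + Real.sqrt (N / Real.log (Real.log N))) ^ 2 *
        (Real.log (1 + Real.sqrt (N / Real.log (Real.log N)))) ^ 2 -
      (Real.sqrt (N / Real.log (Real.log N))) ^ 2 := by
  have hN0 : (0:ℝ) < N := by linarith
  set b := Real.log N with hbdef
  have hb11 : 11 ≤ b := by
    have h656 : Real.log 65536 = 16 * Real.log 2 := by
      rw [show (65536:ℝ) = 2 ^ (16:ℕ) by norm_num, Real.log_pow]; norm_num
    have h2 := Real.log_two_gt_d9
    have hle : Real.log 65536 ≤ b := Real.log_le_log (by norm_num) hN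
    linarith
  have hb0 : 0 < b := by linarith
  set P := Real.log b with hPdef
  have hP0 : 0 < P := Real.log_pos (by linarith)
  have h256 : (256:ℝ) ≤ Real.sqrt N := by
    rw [Real.le_sqrt (by norm_num) hN0.le]; nlinarith
  have hs4 : (16:ℝ) ≤ Real.sqrt (Real.sqrt N) := by
    rw [Real.le_sqrt (by norm_num) (Real.sqrt_nonneg N)]; nlinarith
  have hssq : Real.sqrt (Real.sqrt N) * Real.sqrt (Real.sqrt N) = Real.sqrt N :=
    Real.mul_self_sqrt (Real.sqrt_nonneg N)
  have hbsqrtN : b ≤ Real.sqrt N := by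
    have h1 : Real.log (Real.sqrt N) ≤ 2 * Real.sqrt (Real.sqrt N) :=
      log_le_two_sqrt (Real.sqrt_pos.mpr hN0)
    have h2 : Real.log (Real.sqrt N) = b / 2 := Real.log_sqrt hN0.le
    nlinarith
  have hPb : P ≤ b := Real.log_le_self hb0.le
  have hPsb : P ≤ 2 * Real.sqrt b := log_le_two_sqrt hb0
  have hPsqN : P ≤ Real.sqrt N := hPb.trans hbsqrtN
  have hlogP : Real.log P ≤ b / 2 := by
    have h1 := Real.log_le_log hP0 hPsqN
    rw [Real.log_sqrt hN0.le] at h1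
    linarith
  set x := Real.sqrt (N / P) with hxdef
  have hNP0 : 0 < N / P := div_pos hN0 hP0
  have hx0 : 0 < x := Real.sqrt_pos.mpr hNP0
  have hx2 : x ^ 2 = N / P := Real.sq_sqrt hNP0.le
  have hsqNx : Real.sqrt N ≤ N / P := by
    have := div_le_div_of_nonneg_left hN0.le hP0 hPsqN
    rwa [Real.div_sqrt] at this
  have hx16 : 16 ≤ x := hs4.trans (Real.sqrt_le_sqrt hsqNx)
  have hlogx : Real.log x = (b - Real.log P) / 2 := by
    rw [hxdef, Real.log_sqrt hNP0.le, Real.log_div (ne_of_gt hN0) (ne_of_gt hP0)]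
  have hlogx4 : b / 4 ≤ Real.log x := by rw [hlogx]; linarith
  set L := Real.log (1 + x) with hLdef
  have hL : Real.log x ≤ L := Real.log_le_log hx0 (by linarith)
  have hL2 : 2 ≤ L := by linarith
  have hsb0 : 0 < Real.sqrt b := Real.sqrt_pos.mpr hb0
  have hsb : Real.sqrt b * Real.sqrt b = b := Real.mul_self_sqrt hb0.le
  have hstep1 : N * b * Real.sqrt b / 64 ≤ (1/2) * (N / P) * (b / 4) ^ 2 := by
    have he : (1/2) * (N / P) * (b / 4) ^ 2 = N * b ^ 2 / (32 * P) := by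
      field_simp; ring
    rw [he, div_le_div_iff₀ (by norm_num) (by positivity)]
    have h1 : N * b * Real.sqrt b * (32 * P) ≤ N * b * Real.sqrt b * (64 * Real.sqrt b) := by
      apply mul_le_mul_of_nonneg_left (by linarith) (by positivity)
    have h2 : N * b * Real.sqrt b * (64 * Real.sqrt b) = N * b ^ 2 * 64 := by
      linear_combination 64 * N * b * hsb
    linarith
  have hstep2 : (1/2) * (N / P) * (b / 4) ^ 2 ≤ (1/2) * x ^ 2 * L ^ 2 := by
    rw [hx2]
    have hbL : b / 4 ≤ L := le_trans hlogx4 hL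
    have h1 : (b/4)^2 ≤ L^2 := pow_le_pow_left₀ (by positivity) hbL 2
    have h2 : (0:ℝ) ≤ 1/2 * (N/P) := by positivity
    exact mul_le_mul_of_nonneg_left h1 h2
  have hstep3 : (1/2) * x ^ 2 * L ^ 2 ≤ (1 + x) ^ 2 * L ^ 2 - x ^ 2 := by
    have h1 : (0:ℝ) ≤ L^2 * (1 + 2*x) := by positivity
    have h2 : (0:ℝ) ≤ x^2 * (L^2/2 - 1) := mul_nonneg (sq_nonneg x) (by nlinarith [hL2])
    nlinarith [h1, h2]
  linarith

private lemma key2 (N : ℝ) (hN : 65536 ≤ N) :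
    0 < (1 + Real.sqrt (N / Real.log (Real.log N))) ^ 2 *
          (Real.log (1 + Real.sqrt (N / Real.log (Real.log N)))) ^ 2 -
        (Real.sqrt (N / Real.log (Real.log N))) ^ 2 ∧
      1 / ((1 + Real.sqrt (N / Real.log (Real.log N))) ^ 2 *
          (Real.log (1 + Real.sqrt (N / Real.log (Real.log N)))) ^ 2 -
        (Real.sqrt (N / Real.log (Real.log N))) ^ 2) ≤
        64 / (N * Real.log N * Real.sqrt (Real.log N)) := by
  have hN0 : (0:ℝ) < N := by linarith
  have hb0 : 0 < Real.log N := Real.log_pos (by linarith)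
  have hM0 : 0 < N * Real.log N * Real.sqrt (Real.log N) := by positivity
  have hkey := key N hN
  have hD0 : 0 < (1 + Real.sqrt (N / Real.log (Real.log N))) ^ 2 *
          (Real.log (1 + Real.sqrt (N / Real.log (Real.log N)))) ^ 2 -
        (Real.sqrt (N / Real.log (Real.log N))) ^ 2 :=
    lt_of_lt_of_le (by positivity) hkey
  refine ⟨hD0, ?_⟩
  rw [div_le_div_iff₀ hD0 hM0]
  linarith

private lemma tele {u : ℕ → ℝ} (hmono : ∀ n, u (n + 1) ≤ u n) (hnn : ∀ n, 0 ≤ u n) :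
    Summable (fun n => u n - u (n + 1)) := by
  apply summable_of_sum_range_le (c := u 0)
  · intro n; linarith [hmono n]
  · intro n; rw [Finset.sum_range_sub' u n]; linarith [hnn n]

private lemma sqrt_inv_diff_ge {a b : ℝ} (ha : 1 ≤ a) (hab : a ≤ b) :
    (b - a) / (2 * b * Real.sqrt b) ≤ (Real.sqrt a)⁻¹ - (Real.sqrt b)⁻¹ := by
  have ha0 : 0 < a := by linarith
  have hb0 : 0 < b := by linarith
  set sa := Real.sqrt a with hsadef
  set sb := Real.sqrt b with hsbdef
  have hsa0 : 0 < sa := Real.sqrt_pos.mpr ha0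
  have hsb0 : 0 < sb := Real.sqrt_pos.mpr hb0
  have hsa : sa * sa = a := Real.mul_self_sqrt ha0.le
  have hsb : sb * sb = b := Real.mul_self_sqrt hb0.le
  have hsab : sa ≤ sb := Real.sqrt_le_sqrt hab
  have hinv : sa⁻¹ - sb⁻¹ = (sb - sa) / (sa * sb) := by
    field_simp
  rw [hinv, div_le_div_iff₀ (by positivity) (by positivity)]
  rw [← hsa, ← hsb]
  have hkey : 0 ≤ sb * ((sb - sa) ^ 2 * (2 * sb + sa)) := by positivity
  nlinarith [hkey]

theorem stmt_13 :
    let h : ℝ → ℝ := fun x => (1 + x) ^ 2 * (Real.log (1 + x)) ^ 2 - x ^ 2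
    Summable (fun n : ℕ =>
      1 / h (Real.sqrt ((((n + 16 : ℕ) : ℝ)) / Real.log (Real.log ((n + 16 : ℕ) : ℝ))))) := by
  intro h
  have hh : h = fun x => (1 + x) ^ 2 * (Real.log (1 + x)) ^ 2 - x ^ 2 := rfl
  rw [hh, ← summable_nat_add_iff 65520]
  set u : ℕ → ℝ := fun n => (Real.sqrt (Real.log ((n : ℝ) + 65535)))⁻¹ with hu
  have hlog1 : ∀ m : ℝ, 0 ≤ m → 1 ≤ Real.log (m + 65535) := by
    intro m hm
    rw [Real.le_log_iff_exp_le (by linarith)]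
    have := Real.exp_one_lt_d9
    linarith
  have humono : ∀ n, u (n + 1) ≤ u n := by
    intro n
    have h1 : 1 ≤ Real.log ((n : ℝ) + 65535) := hlog1 _ (Nat.cast_nonneg n)
    have h2 : Real.log ((n : ℝ) + 65535) ≤ Real.log (((n + 1 : ℕ) : ℝ) + 65535) := by
      apply Real.log_le_log (by linarith)
      push_cast; linarith
    exact inv_anti₀ (Real.sqrt_pos.mpr (by linarith)) (Real.sqrt_le_sqrt h2)
  have hunn : ∀ n, 0 ≤ u n := by
    intro n; simp only [hu]; positivity
  apply Summable.of_nonneg_of_le _ _ ((tele humono hunn).mul_left 128)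
  · intro n
    beta_reduce
    have hN : (65536:ℝ) ≤ ((n + 65520 + 16 : ℕ) : ℝ) := by
      push_cast; linarith [(Nat.cast_nonneg n : (0:ℝ) ≤ (n:ℝ))]
    obtain ⟨hD0, -⟩ := key2 _ hN
    exact le_of_lt (one_div_pos.mpr hD0)
  · intro n
    beta_reduce
    have hNeq : ((n + 65520 + 16 : ℕ) : ℝ) = (n : ℝ) + 65536 := by push_cast; ring
    rw [hNeq]
    have hn0 : (0:ℝ) ≤ (n : ℝ) := Nat.cast_nonneg n
    have hN : (65536:ℝ) ≤ (n : ℝ) + 65536 := by linarith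
    obtain ⟨hD0, hle⟩ := key2 _ hN
    refine hle.trans ?_
    set a := Real.log ((n : ℝ) + 65535) with hadef
    set b := Real.log ((n : ℝ) + 65536) with hbdef
    have ha1 : 1 ≤ a := hlog1 _ hn0
    have hab : a ≤ b := Real.log_le_log (by linarith) (by linarith)
    have hb0 : (0:ℝ) < b := by linarith
    have hsb0 : 0 < Real.sqrt b := Real.sqrt_pos.mpr hb0
    have hN0 : (0:ℝ) < (n : ℝ) + 65536 := by linarith
    have hba : 1 / ((n : ℝ) + 65536) ≤ b - a := by
      have h1 : Real.log (((n : ℝ) + 65535) / ((n : ℝ) + 65536)) ≤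
          ((n : ℝ) + 65535) / ((n : ℝ) + 65536) - 1 :=
        Real.log_le_sub_one_of_pos (by positivity)
      rw [Real.log_div (by positivity) (by positivity)] at h1
      have h2 : ((n : ℝ) + 65535) / ((n : ℝ) + 65536) - 1 = -(1 / ((n : ℝ) + 65536)) := by
        field_simp
        norm_num
      rw [h2] at h1
      rw [hadef, hbdef]
      linarith
    have hstep := sqrt_inv_diff_ge ha1 hab
    have hu1 : u (n + 1) = (Real.sqrt b)⁻¹ := by
      simp only [hu, hbdef]
      congr 3
      push_cast; ring
    have hu0 : u n = (Real.sqrt a)⁻¹ := rfl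
    rw [hu0, hu1]
    have hba' : 1 ≤ (b - a) * ((n : ℝ) + 65536) := by
      rw [div_le_iff₀ hN0] at hba; linarith
    have hfin : 64 / (((n : ℝ) + 65536) * b * Real.sqrt b) ≤
        128 * ((b - a) / (2 * b * Real.sqrt b)) := by
      have he : 128 * ((b - a) / (2 * b * Real.sqrt b)) = 64 * (b - a) / (b * Real.sqrt b) := by
        field_simp; ring
      rw [he, div_le_div_iff₀ (by positivity) (by positivity)]
      nlinarith [mul_le_mul_of_nonneg_right hba' (by positivity : (0:ℝ) ≤ b * Real.sqrt b)]
    have := mul_le_mul_of_nonneg_left hstep (by norm_num : (0:ℝ) ≤ 128)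
    linarith
end

section
/- Suppose h: ℝ → ℝ is even, C², h(0) = h'(0) = h''(0) = 0, h'' strictly increasing, unbounded, concave on [0,∞). Then for all x ∈ ℝ and κ > 0, 1 + κx + (κx)²/2 − h(x)/h(1/κ) ≤ e^{κx}. -/
lemma aux_nonneg_s14 (f : ℝ → ℝ) (hf : Differentiable ℝ f) (h0 : f 0 = 0)
    (hd : ∀ x ∈ Set.Ici (0:ℝ), 0 ≤ deriv f x) : ∀ x ∈ Set.Ici (0:ℝ), 0 ≤ f x := by
  intro x hx
  have hm := monotoneOn_of_deriv_nonneg (convex_Ici 0) hf.continuous.continuousOn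
    (hf.differentiableOn)
    (fun y hy => hd y (le_of_lt (by simpa using hy)))
    (Set.mem_Ici.2 le_rfl) hx (Set.mem_Ici.1 hx)
  rw [h0] at hm; exact hm

lemma aux_deriv_cmul (f : ℝ → ℝ) (hf : Differentiable ℝ f) (c t : ℝ) :
    deriv (fun s => f (c * s)) t = c * deriv f (c * t) := by
  have h1 : HasDerivAt (fun s : ℝ => c * s) c t := by
    simpa using (hasDerivAt_id t).const_mul c
  have h3 : HasDerivAt (fun s => f (c * s)) (deriv f (c * t) * c) t :=
    ((hf (c * t)).hasDerivAt).comp t h1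
  rw [h3.deriv]; ring

theorem stmt_14 (h : ℝ → ℝ) (heven : ∀ x, h (-x) = h x) (hC2 : ContDiff ℝ 2 h)
    (h0 : h 0 = 0) (h1 : deriv h 0 = 0) (h2 : deriv (deriv h) 0 = 0)
    (hmono : StrictMonoOn (deriv (deriv h)) (Set.Ici (0:ℝ)))
    (hunb : ∀ C : ℝ, ∃ x ≥ (0:ℝ), deriv (deriv h) x > C)
    (hconc : ConcaveOn ℝ (Set.Ici (0:ℝ)) (deriv (deriv h))) :
    ∀ x κ : ℝ, 0 < κ →
      1 + κ * x + (κ * x) ^ 2 / 2 - h x / h (1 / κ) ≤ Real.exp (κ * x) := by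
  have hd1 : Differentiable ℝ h := hC2.differentiable (by norm_num)
  have hC1 : ContDiff ℝ 1 (deriv h) :=
    (contDiff_succ_iff_deriv.mp (show ContDiff ℝ (1+1) h by norm_num; exact hC2)).2.2
  have hd2 : Differentiable ℝ (deriv h) := hC1.differentiable (by norm_num)
  -- nonnegativity chain
  have h2nn : ∀ y ∈ Set.Ici (0:ℝ), 0 ≤ deriv (deriv h) y := by
    intro y hy
    have := hmono.monotoneOn (Set.mem_Ici.2 le_rfl) hy (Set.mem_Ici.1 hy)
    rwa [h2] at this
  have h1nn : ∀ y ∈ Set.Ici (0:ℝ), 0 ≤ deriv h y := aux_nonneg_s14 _ hd2 h1 h2nn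
  have hnn : ∀ y ∈ Set.Ici (0:ℝ), 0 ≤ h y := aux_nonneg_s14 _ hd1 h0 h1nn
  have hnn' : ∀ y : ℝ, 0 ≤ h y := by
    intro y
    rcases le_total 0 y with hy | hy
    · exact hnn y hy
    · rw [← heven y]; exact hnn (-y) (Set.mem_Ici.2 (by linarith))
  -- strict positivity of h on (0,∞)
  have h1sm : StrictMonoOn (deriv h) (Set.Ici (0:ℝ)) := by
    apply strictMonoOn_of_deriv_pos (convex_Ici 0) hd2.continuous.continuousOn
    intro y hy
    rw [interior_Ici] at hy
    have := hmono (Set.mem_Ici.2 le_rfl) (Set.mem_Ici.2 hy.le) hy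
    rwa [h2] at this
  have hsm : StrictMonoOn h (Set.Ici (0:ℝ)) := by
    apply strictMonoOn_of_deriv_pos (convex_Ici 0) hd1.continuous.continuousOn
    intro y hy
    rw [interior_Ici] at hy
    have := h1sm (Set.mem_Ici.2 le_rfl) (Set.mem_Ici.2 hy.le) hy
    rwa [h1] at this
  have hpos : ∀ y : ℝ, 0 < y → 0 < h y := by
    intro y hy
    have := hsm (Set.mem_Ici.2 le_rfl) (Set.mem_Ici.2 hy.le) hy
    rwa [h0] at this
  have hdcm : ∀ c : ℝ, Differentiable ℝ (fun y => h (c * y)) :=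
    fun c => hd1.comp (differentiable_id.const_mul c)
  have hdcm2 : ∀ c : ℝ, Differentiable ℝ (fun y => deriv h (c * y)) :=
    fun c => hd2.comp (differentiable_id.const_mul c)
  -- scaling c ≥ 1 : c^2 * h y ≤ h (c * y)
  have hscale2 : ∀ c : ℝ, 1 ≤ c → ∀ y ∈ Set.Ici (0:ℝ), c ^ 2 * h y ≤ h (c * y) := by
    intro c hc
    have step1 : ∀ y ∈ Set.Ici (0:ℝ), c * deriv h y ≤ deriv h (c * y) := by
      intro y hy
      have := aux_nonneg_s14 (fun y => deriv h (c * y) - c * deriv h y)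
        ((hdcm2 c).sub (hd2.const_mul c))
        (by simp [h1])
        (by
          intro z hz
          rw [deriv_fun_sub ((hdcm2 c).differentiableAt) ((hd2.const_mul c).differentiableAt),
            aux_deriv_cmul _ hd2, deriv_const_mul c (hd2.differentiableAt)]
          have hz0 : (0:ℝ) ≤ z := hz
          have hzc : z ≤ c * z := by nlinarith
          have := hmono.monotoneOn (Set.mem_Ici.2 hz0) (Set.mem_Ici.2 (by linarith)) hzc
          nlinarith) y hy
      linarith [show (0:ℝ) ≤ deriv h (c * y) - c * deriv h y from this]
    have := aux_nonneg_s14 (fun y => h (c * y) - c ^ 2 * h y)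
      ((hdcm c).sub (hd1.const_mul _))
      (by simp [h0])
      (by
        intro z hz
        rw [deriv_fun_sub ((hdcm c).differentiableAt) ((hd1.const_mul _).differentiableAt),
          aux_deriv_cmul _ hd1, deriv_const_mul _ (hd1.differentiableAt)]
        have := step1 z hz
        nlinarith [h1nn z hz])
    intro y hy
    have := this y hy
    linarith [show (0:ℝ) ≤ h (c * y) - c ^ 2 * h y from this]
  -- scaling 0 ≤ c ≤ 1 : c^3 * h y ≤ h (c * y)
  have hscale3 : ∀ c : ℝ, 0 ≤ c → c ≤ 1 → ∀ y ∈ Set.Ici (0:ℝ), c ^ 3 * h y ≤ h (c * y) := by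
    intro c hc0 hc1
    have step0 : ∀ y ∈ Set.Ici (0:ℝ), c * deriv (deriv h) y ≤ deriv (deriv h) (c * y) := by
      intro y hy
      have := hconc.2 hy (Set.mem_Ici.2 le_rfl) hc0 (by linarith : (0:ℝ) ≤ 1 - c) (by ring)
      simpa [h2, smul_eq_mul] using this
    have step1 : ∀ y ∈ Set.Ici (0:ℝ), c ^ 2 * deriv h y ≤ deriv h (c * y) := by
      intro y hy
      have := aux_nonneg_s14 (fun y => deriv h (c * y) - c ^ 2 * deriv h y)
        ((hdcm2 c).sub (hd2.const_mul _))
        (by simp [h1])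
        (by
          intro z hz
          rw [deriv_fun_sub ((hdcm2 c).differentiableAt) ((hd2.const_mul _).differentiableAt),
            aux_deriv_cmul _ hd2, deriv_const_mul _ (hd2.differentiableAt)]
          have := step0 z hz
          nlinarith [h2nn z hz]) y hy
      linarith [show (0:ℝ) ≤ deriv h (c * y) - c ^ 2 * deriv h y from this]
    intro y hy
    have := aux_nonneg_s14 (fun y => h (c * y) - c ^ 3 * h y)
      ((hdcm c).sub (hd1.const_mul _))
      (by simp [h0])
      (by
        intro z hz
        rw [deriv_fun_sub ((hdcm c).differentiableAt) ((hd1.const_mul _).differentiableAt),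
          aux_deriv_cmul _ hd1, deriv_const_mul _ (hd1.differentiableAt)]
        have := step1 z hz
        nlinarith [h1nn z hz]) y hy
    linarith [show (0:ℝ) ≤ h (c * y) - c ^ 3 * h y from this]
  -- main proof
  intro x κ hκ
  set t := κ * x with ht
  have hκ' : 0 < 1 / κ := by positivity
  have hHpos : 0 < h (1 / κ) := hpos _ hκ'
  have hxt : x = t / κ := by field_simp [ht]; linarith
  rcases le_or_gt 0 t with htnn | htneg
  · -- t ≥ 0 : easy
    have hx0 : 0 ≤ h x / h (1 / κ) := div_nonneg (hnn' x) hHpos.le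
    have hexp : 1 + t + t ^ 2 / 2 ≤ Real.exp t := by
      have := Real.sum_le_exp_of_nonneg htnn 3
      simp [Finset.sum_range_succ] at this
      nlinarith [this]
    linarith
  · -- t < 0
    have hxneg : x < 0 := by
      by_contra hx
      push_neg at hx
      nlinarith
    have hxeq : h x = h ((-t) * (1 / κ)) := by
      rw [← heven x]
      congr 1
      field_simp [hxt]; linarith
    rcases le_or_gt (-t) 1 with hc1 | hc1
    · -- -1 ≤ t < 0
      have hs := hscale3 (-t) (by linarith) hc1 (1 / κ) (Set.mem_Ici.2 hκ'.le)
      have hratio : (-t) ^ 3 ≤ h x / h (1 / κ) := by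
        rw [hxeq, le_div_iff₀ hHpos]
        linarith [hs]
      have hb := Real.exp_bound (x := t) (by rw [abs_of_neg htneg]; linarith) (n := 3) (by norm_num)
      have hsum : ∑ m ∈ Finset.range 3, t ^ m / m.factorial = 1 + t + t ^ 2 / 2 := by
        norm_num [Finset.sum_range_succ]
      rw [hsum, abs_of_neg htneg] at hb
      norm_num [Nat.factorial] at hb
      have hb' : 1 + t + t ^ 2 / 2 - Real.exp t ≤ (-t) ^ 3 * (2 / 9) := by
        have := (abs_le.mp hb).1
        linarith
      have hcube : (0:ℝ) ≤ (-t) ^ 3 := pow_nonneg (by linarith) 3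
      nlinarith
    · -- t ≤ -1
      have hs := hscale2 (-t) (by linarith) (1 / κ) (Set.mem_Ici.2 hκ'.le)
      have hratio : t ^ 2 ≤ h x / h (1 / κ) := by
        rw [hxeq, le_div_iff₀ hHpos]
        nlinarith [hs]
      have hexp : (0:ℝ) < Real.exp t := Real.exp_pos t
      nlinarith
end
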